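/- The term rewriting system on ν_n-terms with rules (h₀) q(eᵢ, x₁,...,xₙ) ↦ xᵢ and (h₁) q(q(x,y₁,...,yₙ), z₁,...,zₙ) ↦ q(x, q(y₁,z₁,...,zₙ),...,q(yₙ,z₁,...,zₙ)) is terminating, and its normal forms are exactly the head normal forms. -/
import Mathlib


/-- Terms of the type `ν_n = (q, e₁,…,eₙ)` over countably many variables. -/
inductive Tm (n : ℕ) : Type where
  | var : ℕ → Tm n
  | const : Fin n → Tm n
  | q : Tm n → (Fin n → Tm n) → Tm n

/-- One-step rewriting with the rules
(h₀) `q(eᵢ, x₁,…,xₙ) ↦ xᵢ` and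
(h₁) `q(q(x,ȳ), z̄) ↦ q(x, q(y₁,z̄),…,q(yₙ,z̄))`,
closed under contexts (rewriting in the head and in any argument of `q`). -/
inductive Step {n : ℕ} : Tm n → Tm n → Prop where
  | h0 (i : Fin n) (x : Fin n → Tm n) : Step (.q (.const i) x) (x i)
  | h1 (x : Tm n) (y z : Fin n → Tm n) :
      Step (.q (.q x y) z) (.q x (fun i => .q (y i) z))
  | head {t t' : Tm n} (x : Fin n → Tm n) : Step t t' → Step (.q t x) (.q t' x)
  | arg {t : Tm n} (x : Fin n → Tm n) (i : Fin n) {u : Tm n} :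
      Step (x i) u → Step (.q t x) (.q t (Function.update x i u))

/-- Head normal forms: `t ::= eᵢ | x | q(x, t₁,…,tₙ)` with `x` a variable. -/
inductive IsHnf {n : ℕ} : Tm n → Prop where
  | var (v : ℕ) : IsHnf (.var v)
  | const (i : Fin n) : IsHnf (.const i)
  | q (v : ℕ) (ts : Fin n → Tm n) : (∀ i, IsHnf (ts i)) → IsHnf (.q (.var v) ts)

/-- A measure strictly decreasing along `Step`. -/
def Tm.m {n : ℕ} : Tm n → ℕ
  | .var _ => 2
  | .const _ => 2
  | .q t x => t.m * (2 + ∑ i, (x i).m)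

lemma Tm.m_pos {n : ℕ} (t : Tm n) : 0 < t.m := by
  induction t with
  | var _ => simp [Tm.m]
  | const _ => simp [Tm.m]
  | q t x ih ihx => exact Nat.mul_pos ih (by positivity)

lemma step_m_lt {n : ℕ} {t u : Tm n} (h : Step t u) : u.m < t.m := by
  induction h with
  | h0 i x =>
      have hle : (x i).m ≤ ∑ j, (x j).m :=
        Finset.single_le_sum (f := fun j => (x j).m) (fun j _ => Nat.zero_le _) (Finset.mem_univ i)
      simp only [Tm.m]
      nlinarith [Tm.m_pos (x i)]
  | h1 x y z =>
      simp only [Tm.m]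
      rw [← Finset.sum_mul]
      have hx := Tm.m_pos x
      nlinarith [Nat.zero_le (∑ i, (y i).m), Nat.zero_le (∑ i, (z i).m)]
  | head x _ ih =>
      simp only [Tm.m]
      exact Nat.mul_lt_mul_of_lt_of_le ih le_rfl (by positivity)
  | @arg t x i u _ ih =>
      simp only [Tm.m]
      have h1 : ∑ j, (Function.update x i u j).m < ∑ j, (x j).m := by
        have := Finset.sum_update_of_mem (f := fun j => (x j).m)
          (Finset.mem_univ i) (b := u.m)
        have h2 : (∑ j, (Function.update x i u j).m)
            = u.m + ∑ j ∈ Finset.univ \ {i}, (x j).m := by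
          rw [← this]
          exact Finset.sum_congr rfl (fun j _ => by
            by_cases hj : j = i <;> simp [hj, Function.update])
        have h3 : (∑ j, (x j).m) = (x i).m + ∑ j ∈ Finset.univ \ {i}, (x j).m :=
          Finset.sum_eq_add_sum_sdiff_singleton_of_mem (Finset.mem_univ i) _
        omega
      exact Nat.mul_lt_mul_of_le_of_lt le_rfl (by omega) (Tm.m_pos t)

/-- The rewriting system `(h₀), (h₁)` is terminating (the converse of `Step` is
well-founded), and its normal forms are exactly the head normal forms. -/
theorem step_terminating_and_nf_iff_hnf {n : ℕ} :
    WellFounded (fun a b : Tm n => Step b a) ∧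
    (∀ t : Tm n, (∀ u : Tm n, ¬ Step t u) ↔ IsHnf t) := by
  constructor
  · exact Subrelation.wf (fun h => step_m_lt h) (InvImage.wf Tm.m Nat.lt_wfRel.wf)
  · intro t
    constructor
    · intro hnf
      induction t with
      | var v => exact .var v
      | const i => exact .const i
      | q t x iht ihx =>
          have hargs : ∀ i, IsHnf (x i) := fun i =>
            ihx i (fun u hu => hnf _ (Step.arg x i hu))
          cases t with
          | var v => exact .q v x hargs
          | const i => exact absurd (Step.h0 i x) (hnf _)
          | q a b => exact absurd (Step.h1 a b x) (hnf _)
    · intro h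
      induction h with
      | var v => intro u hu; cases hu
      | const i => intro u hu; cases hu
      | q v ts _ ih =>
          intro u hu
          cases hu with
          | head _ h => cases h
          | arg _ i h => exact ih i _ h
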